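/- If there exists a t-multimagic square of order m and a t-multimagic square of order n, then there exists a t-multimagic square of order mn. -/
import Mathlib


open Finset

/-- An orthogonal array of strength `t` with `k` rows (constraints), columns indexed
by `ι`, symbols in `α`, and index `lam`: in every choice of `t` distinct rows,
every `t`-tuple of symbols appears in exactly `lam` columns. -/
def IsOAOn {α ι : Type*} [Fintype α] [DecidableEq α] [Fintype ι] {k : ℕ} (t : ℕ)
    (A : Fin k → ι → α) (lam : ℕ) : Prop :=
  ∀ rows : Fin t → Fin k, Function.Injective rows → ∀ x : Fin t → α,
    (Finset.univ.filter fun c : ι => ∀ i, A (rows i) c = x i).card = lam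

/-- An array is simple if no two of its columns are identical. -/
def IsSimpleArr {α ι : Type*} {k : ℕ} (A : Fin k → ι → α) : Prop :=
  Function.Injective fun c : ι => fun i => A i c

/-- A large set of orthogonal arrays: a family (indexed by `σ`) of simple OAs of
strength `t` and index `lam` such that every `k`-tuple of symbols occurs as a
column of exactly one array of the family. -/
def IsLOAOn {α ι σ : Type*} [Fintype α] [DecidableEq α] [Fintype ι] {k : ℕ} (t : ℕ)
    (A : σ → Fin k → ι → α) (lam : ℕ) : Prop :=
  (∀ s, IsOAOn t (A s) lam ∧ IsSimpleArr (A s)) ∧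
  ∀ x : Fin k → α, ∃! p : σ × ι, (fun i => A p.1 i p.2) = x

/-- A strong double large set of orthogonal arrays `SDLOA(N; t, k, v)`:
the family `A_0, …, A_{N-1}` is an LOA, the derived arrays `B_j`
(whose `s`-th column is the `j`-th column of `A_s`) form an LOA, and the arrays
`D` (`j`-th column = `j`-th column of `A_j`) and `D'` (`j`-th column =
`(N-1-j)`-th column of `A_j`) are both OAs. -/
def IsSDLOA {α : Type*} [Fintype α] [DecidableEq α] {k N : ℕ} (t : ℕ)
    (A : Fin N → Fin k → Fin N → α) (lam : ℕ) : Prop :=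
  IsLOAOn t A lam ∧
  IsLOAOn t (fun (j : Fin N) (i : Fin k) (s : Fin N) => A s i j) lam ∧
  IsOAOn t (fun (i : Fin k) (j : Fin N) => A j i j) lam ∧
  IsOAOn t (fun (i : Fin k) (j : Fin N) => A j i (Fin.rev j)) lam

/-- A `t`-multimagic square of order `n`: an `n × n` matrix whose entries are the
consecutive integers `0, …, n^2 - 1` and such that, for every `1 ≤ e ≤ t`,
the entrywise `e`-th power has equal row sums, column sums, and sums on both
diagonals. -/
def IsMultimagic (n t : ℕ) (M : Fin n → Fin n → ℕ) : Prop :=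
  (∀ i j, M i j < n ^ 2) ∧
  (Function.Injective fun p : Fin n × Fin n => M p.1 p.2) ∧
  ∀ e, 1 ≤ e → e ≤ t → ∃ S,
    (∀ i, ∑ j, (M i j) ^ e = S) ∧ (∀ j, ∑ i, (M i j) ^ e = S) ∧
    (∑ i, (M i i) ^ e = S) ∧ (∑ i, (M i (Fin.rev i)) ^ e = S)

/-- A set of `m` complementary `t`-multimagic squares of order `n`, `m`-CMS(`n`,`t`):
`m` multimagic squares such that summing the `(t+1)`-st powers of the entries over
all `m` squares along any fixed row, any fixed column, or either diagonal always
gives `m · S_{t+1}(n)` (the conditions are stated multiplied through by `n`). -/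
def IsCMS (m n t : ℕ) (B : Fin m → Fin n → Fin n → ℕ) : Prop :=
  (∀ s, IsMultimagic n t (B s)) ∧
  (∀ i, n * ∑ s, ∑ j, (B s i j) ^ (t + 1) = m * ∑ k ∈ Finset.range (n ^ 2), k ^ (t + 1)) ∧
  (∀ j, n * ∑ s, ∑ i, (B s i j) ^ (t + 1) = m * ∑ k ∈ Finset.range (n ^ 2), k ^ (t + 1)) ∧
  (n * ∑ s, ∑ i, (B s i i) ^ (t + 1) = m * ∑ k ∈ Finset.range (n ^ 2), k ^ (t + 1)) ∧
  (n * ∑ s, ∑ i, (B s i (Fin.rev i)) ^ (t + 1) = m * ∑ k ∈ Finset.range (n ^ 2), k ^ (t + 1))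

/-- Any `t` rows of the matrix `M` are linearly independent. -/
def RowsIndep {F : Type*} [Field F] {m' : Type*} {s : ℕ} (t : ℕ)
    (M : Matrix m' (Fin s) F) : Prop :=
  ∀ rows : Fin t → m', Function.Injective rows → LinearIndependent F fun i => M (rows i)

/-- The block matrix `(A, B)` (with `A, B` of the same shape) is nonsingular, phrased
via bijectivity of the associated linear map. -/
def NonsingularPair {F : Type*} [Field F] {m' : Type*} {s : ℕ}
    (A B : Matrix m' (Fin s) F) : Prop :=
  Function.Bijective fun p : (Fin s → F) × (Fin s → F) => A.mulVec p.1 + B.mulVec p.2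

lemma magic_sums {m t : ℕ} (hm : 0 < m) {M : Fin m → Fin m → ℕ} (h : IsMultimagic m t M) :
    ∃ S : ℕ → ℕ, ∀ k, k ≤ t →
      (∀ i, ∑ j, M i j ^ k = S k) ∧ (∀ j, ∑ i, M i j ^ k = S k) ∧
      (∑ i, M i i ^ k = S k) ∧ (∑ i, M i (Fin.rev i) ^ k = S k) := by
  refine ⟨fun k => ∑ j, M ⟨0, hm⟩ j ^ k, fun k hk => ?_⟩
  rcases Nat.eq_zero_or_pos k with rfl | hk1
  · simp
  · obtain ⟨S, hr, hc, hd, hd'⟩ := h.2.2 k hk1 hk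
    exact ⟨fun i => (hr i).trans (hr _).symm, fun j => (hc j).trans (hr _).symm,
      hd.trans (hr _).symm, hd'.trans (hr _).symm⟩

lemma core {ι κ : Type*} [Fintype ι] [Fintype κ] (f : ι → ℕ) (g : κ → ℕ) (q E : ℕ) :
    ∑ c, ∑ d, (f c * q + g d) ^ E =
      ∑ k ∈ Finset.range (E+1), (∑ c, f c ^ k) * q ^ k * (∑ d, g d ^ (E - k)) * E.choose k := by
  calc ∑ c, ∑ d, (f c * q + g d) ^ E
      = ∑ c, ∑ k ∈ Finset.range (E+1), ∑ d,
          (f c ^ k * q ^ k) * (g d ^ (E - k) * E.choose k) := by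
        refine Finset.sum_congr rfl fun c _ => ?_
        rw [Finset.sum_comm]
        refine Finset.sum_congr rfl fun d _ => ?_
        rw [add_pow]
        exact Finset.sum_congr rfl fun k _ => by rw [mul_pow]; push_cast; ring
    _ = ∑ k ∈ Finset.range (E+1), ∑ c, ∑ d,
          (f c ^ k * q ^ k) * (g d ^ (E - k) * E.choose k) := Finset.sum_comm
    _ = _ := by
        refine Finset.sum_congr rfl fun k _ => ?_
        rw [← Finset.sum_mul_sum, ← Finset.sum_mul, ← Finset.sum_mul]
        ring

lemma rev_prod {m n : ℕ} (a : Fin m) (b : Fin n) :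
    Fin.rev (finProdFinEquiv (a, b)) = finProdFinEquiv (Fin.rev a, Fin.rev b) := by
  apply Fin.ext
  simp only [Fin.val_rev, finProdFinEquiv_apply_val]
  have h0 : n * (a.1 + 1) = n * a.1 + n := by ring
  have h1 : n * (a.1 + 1) + n * (m - (a.1 + 1)) = n * m := by
    rw [← Nat.mul_add]; congr 1; omega
  have h3 : m * n = n * m := Nat.mul_comm m n
  have := a.2
  have := b.2
  omega

lemma add_mul_inj {c x y b b' : ℕ} (hb : b < c) (hb' : b' < c) (h : x * c + b = y * c + b') :
    x = y ∧ b = b' := by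
  have hc : 0 < c := lt_of_le_of_lt (Nat.zero_le b) hb
  have hx : (x * c + b) / c = x := by
    rw [mul_comm, Nat.mul_add_div hc, Nat.div_eq_of_lt hb, add_zero]
  have hy : (y * c + b') / c = y := by
    rw [mul_comm, Nat.mul_add_div hc, Nat.div_eq_of_lt hb', add_zero]
  have hxy : x = y := by rw [← hx, ← hy, h]
  subst hxy
  exact ⟨rfl, by omega⟩


/-- Product construction: an MS(m,t) and an MS(n,t) give an MS(mn,t). -/
theorem multimagic_product (m n t : ℕ)
    (h1 : ∃ M : Fin m → Fin m → ℕ, IsMultimagic m t M)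
    (h2 : ∃ M : Fin n → Fin n → ℕ, IsMultimagic n t M) :
    ∃ M : Fin (m * n) → Fin (m * n) → ℕ, IsMultimagic (m * n) t M := by
  obtain ⟨A, hA⟩ := h1
  obtain ⟨B, hB⟩ := h2
  rcases Nat.eq_zero_or_pos (m * n) with hmn | hmn
  · haveI : IsEmpty (Fin (m * n)) := by rw [hmn]; infer_instance
    refine ⟨fun _ _ => 0, fun i => isEmptyElim i, fun p => isEmptyElim p.1,
      fun e _ _ => ⟨0, fun i => isEmptyElim i, fun j => isEmptyElim j, ?_, ?_⟩⟩ <;> simp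
  · have hm : 0 < m := by
      rcases Nat.eq_zero_or_pos m with rfl | h
      · simp at hmn
      · exact h
    have hn : 0 < n := by
      rcases Nat.eq_zero_or_pos n with rfl | h
      · simp at hmn
      · exact h
    obtain ⟨SA, hSA⟩ := magic_sums hm hA
    obtain ⟨SB, hSB⟩ := magic_sums hn hB
    set e : Fin m × Fin n ≃ Fin (m * n) := finProdFinEquiv with he
    refine ⟨fun i j => A (e.symm i).1 (e.symm j).1 * n ^ 2 + B (e.symm i).2 (e.symm j).2,
      ?_, ?_, ?_⟩
    · intro i j
      show A (e.symm i).1 (e.symm j).1 * n ^ 2 + B (e.symm i).2 (e.symm j).2 < (m * n) ^ 2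
      have hA1 := hA.1 (e.symm i).1 (e.symm j).1
      have hB1 := hB.1 (e.symm i).2 (e.symm j).2
      have h3 : (A (e.symm i).1 (e.symm j).1 + 1) * n ^ 2 ≤ m ^ 2 * n ^ 2 :=
        Nat.mul_le_mul_right _ hA1
      have h4 : (A (e.symm i).1 (e.symm j).1 + 1) * n ^ 2
          = A (e.symm i).1 (e.symm j).1 * n ^ 2 + n ^ 2 := by ring
      have h5 : (m * n) ^ 2 = m ^ 2 * n ^ 2 := mul_pow m n 2
      omega
    · intro p q hpq
      simp only at hpq
      obtain ⟨hAe, hBe⟩ := add_mul_inj (hB.1 _ _) (hB.1 _ _) hpq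
      have h4 : ((e.symm p.1).1, (e.symm p.2).1) = ((e.symm q.1).1, (e.symm q.2).1) :=
        hA.2.1 hAe
      have h5 : ((e.symm p.1).2, (e.symm p.2).2) = ((e.symm q.1).2, (e.symm q.2).2) :=
        hB.2.1 hBe
      have e1 : e.symm p.1 = e.symm q.1 := by
        have := congrArg Prod.fst h4; have := congrArg Prod.fst h5
        ext <;> simp_all
      have e2 : e.symm p.2 = e.symm q.2 := by
        have := congrArg Prod.snd h4; have := congrArg Prod.snd h5
        ext <;> simp_all
      have := e.symm.injective e1
      have := e.symm.injective e2
      ext <;> simp_all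
    · intro E hE1 hE2
      refine ⟨∑ k ∈ Finset.range (E+1), SA k * (n^2)^k * SB (E-k) * E.choose k,
        ?_, ?_, ?_, ?_⟩
      · intro i
        rw [← Equiv.sum_comp e (fun j =>
          (A (e.symm i).1 (e.symm j).1 * n ^ 2 + B (e.symm i).2 (e.symm j).2) ^ E)]
        simp only [Equiv.symm_apply_apply]
        rw [Fintype.sum_prod_type]
        show ∑ x : Fin m, ∑ y : Fin n,
          (A (e.symm i).1 x * n ^ 2 + B (e.symm i).2 y) ^ E = _
        rw [core]
        refine Finset.sum_congr rfl fun k hk => ?_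
        have hk' := Finset.mem_range.mp hk
        rw [(hSA k (by omega)).1, (hSB (E - k) (by omega)).1]
      · intro j
        rw [← Equiv.sum_comp e (fun i =>
          (A (e.symm i).1 (e.symm j).1 * n ^ 2 + B (e.symm i).2 (e.symm j).2) ^ E)]
        simp only [Equiv.symm_apply_apply]
        rw [Fintype.sum_prod_type]
        show ∑ x : Fin m, ∑ y : Fin n,
          (A x (e.symm j).1 * n ^ 2 + B y (e.symm j).2) ^ E = _
        rw [core]
        refine Finset.sum_congr rfl fun k hk => ?_
        have hk' := Finset.mem_range.mp hk
        rw [(hSA k (by omega)).2.1, (hSB (E - k) (by omega)).2.1]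
      · rw [← Equiv.sum_comp e (fun i =>
          (A (e.symm i).1 (e.symm i).1 * n ^ 2 + B (e.symm i).2 (e.symm i).2) ^ E)]
        simp only [Equiv.symm_apply_apply]
        rw [Fintype.sum_prod_type]
        show ∑ x : Fin m, ∑ y : Fin n, (A x x * n ^ 2 + B y y) ^ E = _
        rw [core]
        refine Finset.sum_congr rfl fun k hk => ?_
        have hk' := Finset.mem_range.mp hk
        rw [(hSA k (by omega)).2.2.1, (hSB (E - k) (by omega)).2.2.1]
      · have hrev : ∀ p : Fin m × Fin n,
            e.symm (Fin.rev (e p)) = (Fin.rev p.1, Fin.rev p.2) := by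
          intro p
          rw [show e p = e (p.1, p.2) from rfl, he, rev_prod, Equiv.symm_apply_apply]
        rw [← Equiv.sum_comp e (fun i =>
          (A (e.symm i).1 (e.symm (Fin.rev i)).1 * n ^ 2
            + B (e.symm i).2 (e.symm (Fin.rev i)).2) ^ E)]
        simp only [Equiv.symm_apply_apply, hrev]
        rw [Fintype.sum_prod_type]
        show ∑ x : Fin m, ∑ y : Fin n,
          (A x (Fin.rev x) * n ^ 2 + B y (Fin.rev y)) ^ E = _
        rw [core]
        refine Finset.sum_congr rfl fun k hk => ?_
        have hk' := Finset.mem_range.mp hk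
        rw [(hSA k (by omega)).2.2.2, (hSB (E - k) (by omega)).2.2.2]
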